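/- Assume the Markov chain with transition kernel P is m-recurrent for some nonzero σ-finite measure m. Then for every x ∈ S, the set T(x) = { y ∈ S : p^n(x,y) = 0 for all n ≥ 1 } satisfies m(T(x)) = 0. -/

import Mathlib

open MeasureTheory ProbabilityTheory
open scoped ENNReal NNReal

noncomputable section

/-- The hitting time `T_A = inf {n ≥ 1 : ω n ∈ A}`, with value `⊤ : ℕ∞` if no such `n` exists. -/
def hitTime {S : Type*} (A : Set S) (ω : ℕ → S) : ℕ∞ :=
  sInf ((fun k : ℕ => (k : ℕ∞)) '' {k : ℕ | 1 ≤ k ∧ ω k ∈ A})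

/-- `IsMarkovPath K μ₀ L` says that `L` is the law on path space `ℕ → E` of the
time-homogeneous Markov chain with transition kernel `K` and initial distribution `μ₀`
(the measure produced by the Ionescu–Tulcea construction), characterized through its
finite-dimensional distributions. -/
def IsMarkovPath {E : Type*} [MeasurableSpace E] (K : Kernel E E) (μ₀ : Measure E)
    (L : Measure (ℕ → E)) : Prop :=
  IsProbabilityMeasure L ∧
    L.map (fun ω => ω 0) = μ₀ ∧
    ∀ n : ℕ,
      L.map (fun ω => fun i : Fin (n + 2) => ω (i : ℕ)) =
        (L.map (fun ω => fun i : Fin (n + 1) => ω (i : ℕ))).bind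
          (fun v => (K (v (Fin.last n))).map (Fin.snoc v))

/-- The `n`-step transition kernel `K^n`. -/
def kiter {E : Type*} [MeasurableSpace E] (K : Kernel E E) : ℕ → Kernel E E
  | 0 => Kernel.id
  | n + 1 => (kiter K n) ∘ₖ K

instance kiter.isMarkovKernel {E : Type*} [MeasurableSpace E] (K : Kernel E E)
    [IsMarkovKernel K] (n : ℕ) : IsMarkovKernel (kiter K n) := by
  induction n with
  | zero => rw [kiter]; infer_instance
  | succ n ih => rw [kiter]; infer_instance

/-- `hitTime A ω < ⊤` iff the path visits `A` at some time `≥ 1`. -/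
lemma hitTime_lt_top_iff {S : Type*} (A : Set S) (ω : ℕ → S) :
    hitTime A ω < ⊤ ↔ ∃ k : ℕ, ω (k + 1) ∈ A := by
  constructor
  · intro h
    by_contra hc
    push_neg at hc
    have hempty : {k : ℕ | 1 ≤ k ∧ ω k ∈ A} = ∅ := by
      ext k
      simp only [Set.mem_setOf_eq, Set.mem_empty_iff_false, iff_false, not_and]
      intro hk
      match k, hk with
      | (j + 1), _ => exact hc j
    rw [hitTime, hempty] at h
    simp at h
  · rintro ⟨k, hk⟩
    have hle : hitTime A ω ≤ ((k + 1 : ℕ) : ℕ∞) :=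
      sInf_le ⟨k + 1, ⟨Nat.succ_le_succ (Nat.zero_le k), hk⟩, rfl⟩
    exact lt_of_le_of_lt hle (WithTop.coe_lt_top _)

lemma measurable_snocPair {E : Type*} [MeasurableSpace E] (n : ℕ) :
    Measurable (fun q : (Fin n → E) × E => Fin.snoc q.1 q.2 : _ → Fin (n + 1) → E) := by
  apply measurable_pi_lambda
  intro i
  refine Fin.lastCases ?_ ?_ i
  · simpa only [Fin.snoc_last] using measurable_snd
  · intro j
    simp only [Fin.snoc_castSucc]
    exact (measurable_pi_apply j).comp measurable_fst

lemma kiter_succ' {E : Type*} [MeasurableSpace E] (K : Kernel E E) [IsMarkovKernel K] (n : ℕ) :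
    kiter K (n + 1) = K ∘ₖ kiter K n := by
  induction n with
  | zero => simp [kiter, Kernel.id_comp, Kernel.comp_id]
  | succ n ih =>
    show kiter K (n + 1) ∘ₖ K = K ∘ₖ (kiter K n ∘ₖ K)
    rw [ih, Kernel.comp_assoc]

/-- Measurability of the one-step extension map used in `IsMarkovPath`. -/
lemma measurable_extend {E : Type*} [MeasurableSpace E] (K : Kernel E E) [IsMarkovKernel K]
    (n : ℕ) :
    Measurable (fun v : Fin (n + 1) → E =>
      (K (v (Fin.last n))).map (@Fin.snoc (n + 1) (fun _ => E) v)) := by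
  rw [Measure.measurable_measure]
  intro s hs
  have h1 : ∀ v : Fin (n + 1) → E,
      (K (v (Fin.last n))).map (@Fin.snoc (n + 1) (fun _ => E) v) s =
        K (v (Fin.last n)) {y : E | (@Fin.snoc (n + 1) (fun _ => E) v y) ∈ s} := by
    intro v
    have hsv : Measurable (@Fin.snoc (n + 1) (fun _ => E) v) :=
      (measurable_snocPair (n + 1)).comp (measurable_prodMk_left)
    rw [Measure.map_apply hsv hs]
    rfl
  simp_rw [h1]
  have ht : MeasurableSet {q : (Fin (n + 1) → E) × E | Fin.snoc q.1 q.2 ∈ s} :=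
    (measurable_snocPair (n + 1)) hs
  have := Kernel.measurable_kernel_prodMk_left
    (κ := K.comap (fun v : Fin (n + 1) → E => v (Fin.last n)) (measurable_pi_apply _)) ht
  simpa [Kernel.comap_apply, Set.preimage] using this

/-- The one-dimensional marginals of a Markov path measure are given by the iterated kernel. -/
lemma markovPath_marginal {E : Type*} [MeasurableSpace E] (K : Kernel E E) [IsMarkovKernel K]
    (x : E) (L : Measure (ℕ → E)) (hL : IsMarkovPath K (Measure.dirac x) L) (n : ℕ) :
    L.map (fun ω => ω n) = kiter K n x := by
  induction n with
  | zero =>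
    rw [hL.2.1]
    simp [kiter, Kernel.id_apply]
  | succ n ih =>
    have hmeasJ : ∀ m : ℕ, Measurable (fun ω : ℕ → E => fun i : Fin m => ω (i : ℕ)) :=
      fun m => measurable_pi_lambda _ (fun i => measurable_pi_apply _)
    -- express the marginal at `n+1` through the `(n+2)`-dimensional joint law
    have hA : L.map (fun ω => ω (n + 1)) =
        (L.map (fun ω => fun i : Fin (n + 2) => ω (i : ℕ))).map
          (fun v => v (Fin.last (n + 1))) := by
      rw [Measure.map_map (measurable_pi_apply _) (hmeasJ (n + 2))]
      rfl
    rw [hA, hL.2.2 n]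
    ext A hA'
    rw [Measure.map_apply (measurable_pi_apply _) hA',
      Measure.bind_apply ((measurable_pi_apply (Fin.last (n + 1))) hA') (measurable_extend K n).aemeasurable]
    have hinner : ∀ v : Fin (n + 1) → E,
        (K (v (Fin.last n))).map (@Fin.snoc (n + 1) (fun _ => E) v)
            ((fun w : Fin (n + 2) → E => w (Fin.last (n + 1))) ⁻¹' A) =
          K (v (Fin.last n)) A := by
      intro v
      have hsv : Measurable (@Fin.snoc (n + 1) (fun _ => E) v) :=
        (measurable_snocPair (n + 1)).comp (measurable_prodMk_left)
      rw [Measure.map_apply hsv (measurable_pi_apply _ hA')]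
      congr 1
      ext y
      simp [Fin.snoc_last]
    simp_rw [hinner]
    -- LHS integral over the joint law reduces to an integral over L
    have hg : Measurable (fun v : Fin (n + 1) → E => K (v (Fin.last n)) A) :=
      (K.measurable_coe hA').comp (measurable_pi_apply (Fin.last n))
    have hg' : Measurable (fun z : E => K z A) := K.measurable_coe hA'
    rw [lintegral_map hg (hmeasJ (n + 1))]
    -- RHS
    rw [kiter_succ', Kernel.comp_apply' _ _ _ hA', ← ih,
      lintegral_map hg' (measurable_pi_apply n)]
    rfl

/-- If the chain is `m`-recurrent then for every `x` the set
`T (x) = {y : p^n (x,y) = 0 for all n ≥ 1}` is `m`-null, where `p n` is a jointly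
measurable version of the density with respect to `m` of the absolutely continuous part of
the `n`-step transition probability. -/
theorem harris_null_set_of_vanishing_densities
    {S : Type*} [MeasurableSpace S] [MeasurableSpace.CountablyGenerated S]
    (P : Kernel S S) [IsMarkovKernel P]
    (Pr : S → Measure (ℕ → S))
    (hPr : ∀ x : S, IsMarkovPath P (Measure.dirac x) (Pr x))
    (m : Measure S) [SigmaFinite m] (hm : m ≠ 0)
    (hrec : ∀ A : Set S, MeasurableSet A → 0 < m A →
      ∀ x : S, Pr x {ω | hitTime A ω < ⊤} = 1)
    (p : ℕ → S → S → ℝ≥0∞)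
    (hp_meas : ∀ n : ℕ, Measurable (fun q : S × S => p n q.1 q.2))
    (hp : ∀ n : ℕ, 1 ≤ n → ∀ x : S, (fun y => p n x y) =ᵐ[m] (kiter P n x).rnDeriv m) :
    ∀ x : S, m {y : S | ∀ n : ℕ, 1 ≤ n → p n x y = 0} = 0 := by
  intro x
  set T : Set S := {y : S | ∀ n : ℕ, 1 ≤ n → p n x y = 0} with hT_def
  have hp_meas' : ∀ n : ℕ, Measurable (fun y => p n x y) :=
    fun n => (hp_meas n).comp measurable_prodMk_left
  have hT_meas : MeasurableSet T := by
    have : T = ⋂ k : ℕ, (fun y => p (k + 1) x y) ⁻¹' {0} := by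
      ext y
      simp only [hT_def, Set.mem_setOf_eq, Set.mem_iInter, Set.mem_preimage,
        Set.mem_singleton_iff]
      constructor
      · exact fun h k => h (k + 1) (Nat.succ_le_succ (Nat.zero_le k))
      · intro h n hn
        match n, hn with
        | (k + 1), _ => exact h k
    rw [this]
    exact MeasurableSet.iInter fun k => (hp_meas' (k + 1)) (measurableSet_singleton 0)
  by_contra hmT
  have hpos : 0 < m T := pos_iff_ne_zero.mpr hmT
  -- singular parts of the n-step transitions are carried by m-conull sets `s k`
  choose s hs_meas hs_sing hs_conull using
    fun k : ℕ => (Measure.mutuallySingular_singularPart (kiter P (k + 1) x) m)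
  -- null sets where `p (k+1) x` differs from the Radon–Nikodym derivative
  set E : ℕ → Set S := fun k =>
    toMeasurable m {y : S | ¬ p (k + 1) x y = (kiter P (k + 1) x).rnDeriv m y} with hE_def
  have hE_null : ∀ k, m (E k) = 0 := by
    intro k
    rw [hE_def, measure_toMeasurable]
    exact hp (k + 1) (Nat.succ_le_succ (Nat.zero_le k)) x
  set B : Set S := T \ ⋃ k : ℕ, ((s k)ᶜ ∪ E k) with hB_def
  have hB_meas : MeasurableSet B :=
    hT_meas.diff (MeasurableSet.iUnion fun k =>
      ((hs_meas k).compl.union (measurableSet_toMeasurable m _)))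
  have hmB : m B = m T := by
    apply measure_diff_null
    exact measure_iUnion_null fun k =>
      measure_union_null (hs_conull k) (hE_null k)
  -- each n-step transition from x gives zero mass to B
  have hBk : ∀ k : ℕ, kiter P (k + 1) x B = 0 := by
    intro k
    have hdec := (kiter P (k + 1) x).haveLebesgueDecomposition_add m
    have h1 : kiter P (k + 1) x B =
        (kiter P (k + 1) x).singularPart m B +
          ∫⁻ y in B, (kiter P (k + 1) x).rnDeriv m y ∂m := by
      conv_lhs => rw [hdec]
      rw [Measure.add_apply, withDensity_apply _ hB_meas]
    have hBs : B ⊆ s k := by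
      intro y hy
      by_contra hys
      exact hy.2 (Set.mem_iUnion.mpr ⟨k, Or.inl hys⟩)
    have hsing0 : (kiter P (k + 1) x).singularPart m B = 0 :=
      le_antisymm ((measure_mono hBs).trans (hs_sing k).le) zero_le
    have hint0 : ∫⁻ y in B, (kiter P (k + 1) x).rnDeriv m y ∂m = 0 := by
      have : ∫⁻ y in B, (kiter P (k + 1) x).rnDeriv m y ∂m = ∫⁻ _ in B, 0 ∂m := by
        apply setLIntegral_congr_fun hB_meas
        intro y hy
        have hyE : y ∉ E k := fun h => hy.2 (Set.mem_iUnion.mpr ⟨k, Or.inr h⟩)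
        have heq : p (k + 1) x y = (kiter P (k + 1) x).rnDeriv m y := by
          by_contra hne
          exact hyE (subset_toMeasurable m _ hne)
        rw [← heq]
        exact hy.1 (k + 1) (Nat.succ_le_succ (Nat.zero_le k))
      rw [this, lintegral_zero]
    rw [h1, hsing0, hint0, add_zero]
  -- but recurrence forces the chain started at x to hit B
  have h1 := hrec B hB_meas (hmB ▸ hpos) x
  have hset : {ω : ℕ → S | hitTime B ω < ⊤} = ⋃ k : ℕ, (fun ω : ℕ → S => ω (k + 1)) ⁻¹' B := by
    ext ω
    simp [hitTime_lt_top_iff, Set.mem_iUnion]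
  rw [hset] at h1
  have hzero : ∀ k : ℕ, Pr x ((fun ω : ℕ → S => ω (k + 1)) ⁻¹' B) = 0 := by
    intro k
    have := markovPath_marginal P x (Pr x) (hPr x) (k + 1)
    rw [← Measure.map_apply (measurable_pi_apply (k + 1)) hB_meas, this]
    exact hBk k
  have hle : Pr x (⋃ k : ℕ, (fun ω : ℕ → S => ω (k + 1)) ⁻¹' B) ≤
      ∑' k : ℕ, Pr x ((fun ω : ℕ → S => ω (k + 1)) ⁻¹' B) := measure_iUnion_le _
  rw [h1] at hle
  simp [hzero] at hle
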